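/- Let k ≥ 1 and l be integers, N ≥ 1, Λ_a and Λ̃_a (a = 1, …, N) invertible n×n complex matrices, and P, Q constant n×n matrices with P = −(Λ_a^k + Λ_a^{k−l}) and Q = −(Λ̃_a^k + Λ̃_a^{k−l}) for every a. Let A_a be constant m×n and B_a constant n×m matrices, and define θ(t, j) := Σ_a A_a exp(Λ_a^l t) Λ_a^j and η(t, j) := Σ_a exp(−Λ̃_a^l t) Λ̃_a^{−j} B_a. Let X_{ab} be constant n×n matrices solving the Stein equations Λ̃_a^{−l} X_{ab} Λ_b^l − X_{ab} = B_a A_b for all a, b, and let ω̃ : ℝ → Mat(n×n, ℂ) be entrywise differentiable; set γ₁ := ω̃ P − Q ω̃ and γ₂ := −ω̃_t. Then Ω̃(t, j) := Σ_{a,b=1}^N exp(−Λ̃_a^l t) Λ̃_a^{−j} X_{ab} exp(Λ_b^l t) Λ_b^j + ω̃(t) satisfies Ω̃_{(l)} − Ω̃ = η θ, Ω̃_{(k−l)} − (I + Q) Ω̃_{(k)} + Ω̃ P + (η_{(k−l)} − η) θ_{(k−l)} − γ₁ = 0, and Ω̃_t = −η_t θ − γ₂. -/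

import Mathlib

open Matrix

open NormedSpace

attribute [local instance] Matrix.linftyOpNormedRing Matrix.linftyOpNormedAlgebra

section Aux

variable {R : Type*} [Ring R]

private lemma alg1 (e x f c uj uml ujl vj vl vjl : R)
    (hy : uml * (x * f) * vl = x * f + c)
    (hu : uj * uml = ujl) (hv : vl * vj = vjl) :
    e * ujl * x * f * vjl - e * uj * x * f * vj = e * uj * c * vj := by
  rw [← hu, ← hv]
  calc e * (uj * uml) * x * f * (vl * vj) - e * uj * x * f * vj
      = e * uj * (uml * (x * f) * vl) * vj - e * uj * (x * f) * vj := by noncomm_ring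
    _ = e * uj * (x * f + c) * vj - e * uj * (x * f) * vj := by rw [hy]
    _ = e * uj * c * vj := by noncomm_ring

private lemma alg2 (e x f c uj ujl ujk ujkl uml uk ukl vj vk vkl vl vjk vjkl : R)
    (hy : uml * (x * f) * vl = x * f + c)
    (hQe : e * (uk + ukl) = (uk + ukl) * e)
    (m1 : uk * ujk = uj) (m2 : ukl * ujk = ujl)
    (m3 : ujkl * uml = ujk) (m4 : uj * uml = ujl)
    (m5 : vl * vjkl = vjk) (m6 : vj * vk = vjk) (m7 : vj * vkl = vjkl) :
    e * ujkl * x * f * vjkl - (1 + -(uk + ukl)) * (e * ujk * x * f * vjk)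
      + e * uj * x * f * vj * -(vk + vkl) + (e * ujkl * c * vjkl - e * uj * c * vjkl) = 0 := by
  have hc : c = uml * (x * f) * vl - x * f := by rw [hy]; noncomm_ring
  have E2 : (1 + -(uk + ukl)) * (e * ujk * x * f * vjk)
      = e * ujk * x * f * vjk - e * (uj * (x * f) * vjk) - e * (ujl * (x * f) * vjk) := by
    calc (1 + -(uk + ukl)) * (e * ujk * x * f * vjk)
        = e * ujk * x * f * vjk - (e * (uk + ukl)) * (ujk * (x * f) * vjk) := by
          rw [hQe]; noncomm_ring
      _ = e * ujk * x * f * vjk - e * ((uk * ujk) * (x * f) * vjk)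
          - e * ((ukl * ujk) * (x * f) * vjk) := by noncomm_ring
      _ = _ := by rw [m1, m2]
  have E3 : e * uj * x * f * vj * -(vk + vkl)
      = -(e * (uj * (x * f) * (vj * vk))) - e * (uj * (x * f) * (vj * vkl)) := by noncomm_ring
  have E4a : e * ujkl * c * vjkl
      = e * ((ujkl * uml) * (x * f) * (vl * vjkl)) - e * (ujkl * (x * f) * vjkl) := by
    rw [hc]; noncomm_ring
  have E4b : e * uj * c * vjkl
      = e * ((uj * uml) * (x * f) * (vl * vjkl)) - e * (uj * (x * f) * vjkl) := by
    rw [hc]; noncomm_ring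
  rw [E2, E3, E4a, E4b, m3, m4, m5, m6, m7]
  noncomm_ring

private lemma alg3 (e x ul umj uml ujl2 vl vj f : R)
    (heu : ul * e = e * ul) (hfv : f * vl = vl * f)
    (mA : umj * uml = ujl2) (mB : ul * ujl2 = umj) :
    -(ul * e) * umj * x * f * vj + e * umj * x * (f * vl) * vj
      = ul * e * umj * ((uml * x * vl - x) * (f * vj)) := by
  rw [hfv]
  have key : ∀ z : R, ul * (e * (umj * (uml * z))) = e * (umj * z) := by
    intro z
    calc ul * (e * (umj * (uml * z))) = (ul * e) * ((umj * uml) * z) := by noncomm_ring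
      _ = (e * ul) * (ujl2 * z) := by rw [heu, mA]
      _ = e * ((ul * ujl2) * z) := by noncomm_ring
      _ = e * (umj * z) := by rw [mB]
  calc -(ul * e) * umj * x * f * vj + e * umj * x * (vl * f) * vj
      = e * (umj * (x * (vl * (f * vj)))) - ul * e * (umj * (x * (f * vj))) := by noncomm_ring
    _ = ul * (e * (umj * (uml * (x * (vl * (f * vj)))))) - ul * e * (umj * (x * (f * vj))) := by
        rw [key]
    _ = ul * e * umj * ((uml * x * vl - x) * (f * vj)) := by noncomm_ring

private theorem hasDerivAt_expF {n : ℕ} (M : Matrix (Fin n) (Fin n) ℂ) (t : ℝ) :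
    HasDerivAt (fun s : ℝ => exp (s • M)) (exp (t • M) * M) t := by
  exact hasDerivAt_exp_smul_const (𝕂 := ℝ) M t

private theorem hasDerivAt_expE {n : ℕ} (M : Matrix (Fin n) (Fin n) ℂ) (t : ℝ) :
    HasDerivAt (fun s : ℝ => exp ((-s) • M)) (-(M * exp ((-t) • M))) t := by
  have h1 := hasDerivAt_exp_smul_const' (𝕂 := ℝ) M (-t)
  have h2 : HasDerivAt (fun s : ℝ => -s) (-1 : ℝ) t := (hasDerivAt_id t).neg
  have h3 := h1.scomp t h2
  simp [Function.comp_def] at h3 ⊢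
  exact h3

private theorem comm_zpow_exp {n : ℕ} (M : Matrix (Fin n) (Fin n) ℂ) (i i' : ℤ) (c : ℝ) :
    (M ^ i) * exp (c • M ^ i') = exp (c • M ^ i') * (M ^ i) :=
  (((Matrix.Commute.zpow_zpow_self M i i').smul_right c).exp_right).eq

private theorem zpm {n : ℕ} {u : Matrix (Fin n) (Fin n) ℂ} (du : IsUnit u.det) {i i' i'' : ℤ}
    (h : i + i' = i'') : u ^ i * u ^ i' = u ^ i'' := by rw [← Matrix.zpow_add du, h]

private lemma sum_mul_sum_matrix {n1 n2 n3 N : ℕ} (f : Fin N → Matrix (Fin n1) (Fin n2) ℂ)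
    (g : Fin N → Matrix (Fin n2) (Fin n3) ℂ) :
    (∑ i : Fin N, f i) * (∑ j : Fin N, g j) = ∑ i : Fin N, ∑ j : Fin N, f i * g j := by
  rw [Matrix.sum_mul]
  exact Finset.sum_congr rfl fun i _ => Matrix.mul_sum _ _ _

private noncomputable def entryCLM (n : ℕ) (a b : Fin n) :
    Matrix (Fin n) (Fin n) ℂ →L[ℝ] ℂ :=
  LinearMap.toContinuousLinearMap
    { toFun := fun M => M a b, map_add' := fun _ _ => rfl, map_smul' := fun _ _ => rfl }

private theorem entry_deriv {n : ℕ} {f : ℝ → Matrix (Fin n) (Fin n) ℂ}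
    {f' : Matrix (Fin n) (Fin n) ℂ} {t : ℝ} (h : HasDerivAt f f' t) (a b : Fin n) :
    HasDerivAt (fun s => f s a b) (f' a b) t :=
  ((entryCLM n a b).hasFDerivAt.comp_hasDerivAt t h :)

private theorem mul_const_entry_deriv {n p : ℕ} {f : ℝ → Matrix (Fin n) (Fin n) ℂ}
    {f' : Matrix (Fin n) (Fin n) ℂ} {t : ℝ} (h : HasDerivAt f f' t)
    (K : Matrix (Fin n) (Fin p) ℂ) (a : Fin n) (b : Fin p) :
    HasDerivAt (fun s => (f s * K) a b) ((f' * K) a b) t := by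
  simp only [Matrix.mul_apply]
  exact HasDerivAt.fun_sum fun c _ => (entry_deriv h a c).mul_const (K c b)

end Aux

set_option maxHeartbeats 1000000 in
/-- with θ, η as in Statement 12, constant matrices `X_{ab}` solving the Stein
equations `Λ̃_a^{−l} X_{ab} Λ_b^l − X_{ab} = B_a A_b`, and `ω̃ (= om)` a function of `t` only,
`γ₁ = ω̃ P − Q ω̃`, `γ₂ = −ω̃_t`, the function
`Ω̃ = Σ_{a,b} exp(−Λ̃_a^l t) Λ̃_a^{−j} X_{ab} exp(Λ_b^l t) Λ_b^j + ω̃` satisfies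
`Ω̃_{(l)} − Ω̃ = η θ`,
`Ω̃_{(k−l)} − (I+Q) Ω̃_{(k)} + Ω̃ P + (η_{(k−l)} − η) θ_{(k−l)} − γ₁ = 0` and
`Ω̃_t = −η_t θ − γ₂`. -/
theorem stmt_13 (m n N : ℕ) (hN : 1 ≤ N) (k l : ℤ) (hk : 1 ≤ k)
    (Λ Λt : Fin N → Matrix (Fin n) (Fin n) ℂ)
    (hΛ : ∀ a, IsUnit (Λ a)) (hΛt : ∀ a, IsUnit (Λt a))
    (P Q : Matrix (Fin n) (Fin n) ℂ)
    (hP : ∀ a, P = -((Λ a) ^ k + (Λ a) ^ (k - l)))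
    (hQ : ∀ a, Q = -((Λt a) ^ k + (Λt a) ^ (k - l)))
    (A : Fin N → Matrix (Fin m) (Fin n) ℂ) (B : Fin N → Matrix (Fin n) (Fin m) ℂ)
    (θ : ℝ → ℤ → Matrix (Fin m) (Fin n) ℂ)
    (η : ℝ → ℤ → Matrix (Fin n) (Fin m) ℂ)
    (hθ : ∀ t j, θ t j = ∑ a : Fin N, A a * NormedSpace.exp (t • (Λ a) ^ l) * (Λ a) ^ j)
    (hη : ∀ t j, η t j = ∑ a : Fin N, NormedSpace.exp ((-t) • (Λt a) ^ l) * (Λt a) ^ (-j) * B a)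
    (X : Fin N → Fin N → Matrix (Fin n) (Fin n) ℂ)
    (hX : ∀ a b, (Λt a) ^ (-l) * X a b * (Λ b) ^ l - X a b = B a * A b)
    (om omt : ℝ → Matrix (Fin n) (Fin n) ℂ)
    (homt : ∀ t (a b : Fin n), HasDerivAt (fun s => om s a b) (omt t a b) t)
    (γ₁ γ₂ : ℝ → Matrix (Fin n) (Fin n) ℂ)
    (hγ₁ : ∀ t, γ₁ t = om t * P - Q * om t)
    (hγ₂ : ∀ t, γ₂ t = -omt t)
    (Om : ℝ → ℤ → Matrix (Fin n) (Fin n) ℂ)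
    (hOm : ∀ t j, Om t j =
      (∑ a : Fin N, ∑ b : Fin N,
        NormedSpace.exp ((-t) • (Λt a) ^ l) * (Λt a) ^ (-j) * X a b
          * NormedSpace.exp (t • (Λ b) ^ l) * (Λ b) ^ j) + om t) :
    (∀ t j, Om t (j + l) - Om t j = η t j * θ t j) ∧
    (∀ t j, Om t (j + (k - l)) - (1 + Q) * Om t (j + k) + Om t j * P
        + (η t (j + (k - l)) - η t j) * θ t (j + (k - l)) - γ₁ t = 0) ∧
    (∀ ηt : ℝ → ℤ → Matrix (Fin n) (Fin m) ℂ,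
      (∀ t j (a : Fin n) (b : Fin m),
        HasDerivAt (fun s => η s j a b) (ηt t j a b) t) →
      ∀ t j (a b : Fin n),
        HasDerivAt (fun s => Om s j a b) ((-(ηt t j * θ t j) - γ₂ t) a b) t) := by
  have dup : ∀ p, IsUnit (Λt p).det := fun p => (Matrix.isUnit_iff_isUnit_det _).mp (hΛt p)
  have duq : ∀ q, IsUnit (Λ q).det := fun q => (Matrix.isUnit_iff_isUnit_det _).mp (hΛ q)
  -- Stein equation in additive form, with the exponential absorbed
  have hst : ∀ (t : ℝ) (p q : Fin N),
      (Λt p) ^ (-l) * (X p q * exp (t • (Λ q) ^ l)) * (Λ q) ^ l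
        = X p q * exp (t • (Λ q) ^ l) + B p * (A q * exp (t • (Λ q) ^ l)) := by
    intro t p q
    calc (Λt p) ^ (-l) * (X p q * exp (t • (Λ q) ^ l)) * (Λ q) ^ l
        = (Λt p) ^ (-l) * X p q * (exp (t • (Λ q) ^ l) * (Λ q) ^ l) := by noncomm_ring
      _ = (Λt p) ^ (-l) * X p q * ((Λ q) ^ l * exp (t • (Λ q) ^ l)) := by
          rw [← comm_zpow_exp (Λ q) l l t]
      _ = ((Λt p) ^ (-l) * X p q * (Λ q) ^ l) * exp (t • (Λ q) ^ l) := by noncomm_ring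
      _ = (B p * A q + X p q) * exp (t • (Λ q) ^ l) := by
          rw [sub_eq_iff_eq_add.mp (hX p q)]
      _ = X p q * exp (t • (Λ q) ^ l) + B p * (A q * exp (t • (Λ q) ^ l)) := by
          rw [Matrix.add_mul, Matrix.mul_assoc, add_comm]
  refine ⟨?_, ?_, ?_⟩
  · -- part 1
    intro t j
    rw [hOm t (j + l), hOm t j, hη t j, hθ t j, add_sub_add_right_eq_sub,
      sum_mul_sum_matrix, ← Finset.sum_sub_distrib]
    refine Finset.sum_congr rfl fun p _ => ?_
    rw [← Finset.sum_sub_distrib]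
    refine Finset.sum_congr rfl fun q _ => ?_
    rw [alg1 (exp ((-t) • (Λt p) ^ l)) (X p q) (exp (t • (Λ q) ^ l))
      (B p * (A q * exp (t • (Λ q) ^ l)))
      ((Λt p) ^ (-j)) ((Λt p) ^ (-l)) ((Λt p) ^ (-(j + l)))
      ((Λ q) ^ j) ((Λ q) ^ l) ((Λ q) ^ (j + l))
      (hst t p q) (zpm (dup p) (by ring)) (zpm (duq q) (by ring))]
    simp only [Matrix.mul_assoc]
  · -- part 2
    intro t j
    rw [hOm t (j + (k - l)), hOm t (j + k), hOm t j, hη t (j + (k - l)), hη t j,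
      hθ t (j + (k - l)), hγ₁ t]
    have omc : ∀ S1 S2 S3 C : Matrix (Fin n) (Fin n) ℂ,
        S1 + om t - (1 + Q) * (S2 + om t) + (S3 + om t) * P + C - (om t * P - Q * om t)
          = S1 - (1 + Q) * S2 + S3 * P + C := fun S1 S2 S3 C => by noncomm_ring
    rw [omc, ← Finset.sum_sub_distrib, sum_mul_sum_matrix]
    simp only [Matrix.mul_sum, Matrix.sum_mul]
    rw [← Finset.sum_sub_distrib, ← Finset.sum_add_distrib, ← Finset.sum_add_distrib]
    refine Finset.sum_eq_zero fun p _ => ?_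
    rw [← Finset.sum_sub_distrib, ← Finset.sum_add_distrib, ← Finset.sum_add_distrib]
    refine Finset.sum_eq_zero fun q _ => ?_
    rw [hQ p, hP q]
    have crossEq : (exp ((-t) • (Λt p) ^ l) * (Λt p) ^ (-(j + (k - l))) * B p
          - exp ((-t) • (Λt p) ^ l) * (Λt p) ^ (-j) * B p)
          * (A q * exp (t • (Λ q) ^ l) * (Λ q) ^ (j + (k - l)))
        = exp ((-t) • (Λt p) ^ l) * (Λt p) ^ (-(j + (k - l)))
            * (B p * (A q * exp (t • (Λ q) ^ l))) * (Λ q) ^ (j + (k - l))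
          - exp ((-t) • (Λt p) ^ l) * (Λt p) ^ (-j)
            * (B p * (A q * exp (t • (Λ q) ^ l))) * (Λ q) ^ (j + (k - l)) := by
      simp only [Matrix.sub_mul, Matrix.mul_assoc]
    rw [crossEq]
    have m1 : (Λt p) ^ k * (Λt p) ^ (-(j + k)) = (Λt p) ^ (-j) := zpm (dup p) (by ring)
    have m2 : (Λt p) ^ (k - l) * (Λt p) ^ (-(j + k)) = (Λt p) ^ (-(j + l)) :=
      zpm (dup p) (by ring)
    have m3 : (Λt p) ^ (-(j + (k - l))) * (Λt p) ^ (-l) = (Λt p) ^ (-(j + k)) :=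
      zpm (dup p) (by ring)
    have m4 : (Λt p) ^ (-j) * (Λt p) ^ (-l) = (Λt p) ^ (-(j + l)) := zpm (dup p) (by ring)
    have m5 : (Λ q) ^ l * (Λ q) ^ (j + (k - l)) = (Λ q) ^ (j + k) := zpm (duq q) (by ring)
    have m6 : (Λ q) ^ j * (Λ q) ^ k = (Λ q) ^ (j + k) := zpm (duq q) (by ring)
    have m7 : (Λ q) ^ j * (Λ q) ^ (k - l) = (Λ q) ^ (j + (k - l)) := zpm (duq q) (by ring)
    have hQe : exp ((-t) • (Λt p) ^ l) * ((Λt p) ^ k + (Λt p) ^ (k - l))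
        = ((Λt p) ^ k + (Λt p) ^ (k - l)) * exp ((-t) • (Λt p) ^ l) := by
      rw [mul_add, add_mul, comm_zpow_exp (Λt p) k l (-t), comm_zpow_exp (Λt p) (k - l) l (-t)]
    exact alg2 _ _ _ _ _ _ _ _ _ _ _ _ _ _ _ _ _ (hst t p q) hQe m1 m2 m3 m4 m5 m6 m7
  · -- part 3
    intro ηt hηt t j a b
    have hηd : ∀ (i : Fin n) (c : Fin m),
        HasDerivAt (fun s => η s j i c)
          ((∑ p : Fin N, -((Λt p) ^ l * exp ((-t) • (Λt p) ^ l)) * ((Λt p) ^ (-j) * B p))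
            i c) t := by
      intro i c
      have hfun : (fun s => η s j i c)
          = fun s => ∑ p : Fin N, ((exp ((-s) • (Λt p) ^ l) * ((Λt p) ^ (-j) * B p)) i c) := by
        funext s
        rw [hη]
        simp only [Matrix.sum_apply, Matrix.mul_assoc]
      rw [hfun]
      simp only [Matrix.sum_apply]
      exact HasDerivAt.fun_sum fun p _ => mul_const_entry_deriv (hasDerivAt_expE _ t) _ i c
    have hηt_eq : ηt t j
        = ∑ p : Fin N, -((Λt p) ^ l * exp ((-t) • (Λt p) ^ l)) * ((Λt p) ^ (-j) * B p) := by
      ext i c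
      exact (hηt t j i c).unique (hηd i c)
    have hT : ∀ (p q : Fin N), HasDerivAt
        (fun s => exp ((-s) • (Λt p) ^ l) * (Λt p) ^ (-j) * X p q
          * exp (s • (Λ q) ^ l) * (Λ q) ^ j)
        ((-((Λt p) ^ l * exp ((-t) • (Λt p) ^ l)) * (Λt p) ^ (-j) * X p q
            * exp (t • (Λ q) ^ l)
          + exp ((-t) • (Λt p) ^ l) * (Λt p) ^ (-j) * X p q
            * (exp (t • (Λ q) ^ l) * (Λ q) ^ l)) * (Λ q) ^ j) t :=
      fun p q => ((((hasDerivAt_expE _ t).mul_const _).mul_const _).mul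
        (hasDerivAt_expF _ t)).mul_const _
    have hsum := HasDerivAt.fun_sum (u := Finset.univ) fun p _ =>
      HasDerivAt.fun_sum (u := Finset.univ) fun q _ => hT p q
    have hmat : (∑ p : Fin N, ∑ q : Fin N,
        (-((Λt p) ^ l * exp ((-t) • (Λt p) ^ l)) * (Λt p) ^ (-j) * X p q
            * exp (t • (Λ q) ^ l)
          + exp ((-t) • (Λt p) ^ l) * (Λt p) ^ (-j) * X p q
            * (exp (t • (Λ q) ^ l) * (Λ q) ^ l)) * (Λ q) ^ j)
        = -(ηt t j * θ t j) := by
      rw [hηt_eq, hθ t j, sum_mul_sum_matrix]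
      simp only [← Finset.sum_neg_distrib]
      refine Finset.sum_congr rfl fun p _ => ?_
      refine Finset.sum_congr rfl fun q _ => ?_
      have heu : (Λt p) ^ l * exp ((-t) • (Λt p) ^ l)
          = exp ((-t) • (Λt p) ^ l) * (Λt p) ^ l := comm_zpow_exp (Λt p) l l (-t)
      have hfv : exp (t • (Λ q) ^ l) * (Λ q) ^ l
          = (Λ q) ^ l * exp (t • (Λ q) ^ l) := (comm_zpow_exp (Λ q) l l t).symm
      have mA : (Λt p) ^ (-j) * (Λt p) ^ (-l) = (Λt p) ^ (-(j + l)) := zpm (dup p) (by ring)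
      have mB : (Λt p) ^ l * (Λt p) ^ (-(j + l)) = (Λt p) ^ (-j) := zpm (dup p) (by ring)
      calc (-((Λt p) ^ l * exp ((-t) • (Λt p) ^ l)) * (Λt p) ^ (-j) * X p q
            * exp (t • (Λ q) ^ l)
          + exp ((-t) • (Λt p) ^ l) * (Λt p) ^ (-j) * X p q
            * (exp (t • (Λ q) ^ l) * (Λ q) ^ l)) * (Λ q) ^ j
          = -((Λt p) ^ l * exp ((-t) • (Λt p) ^ l)) * (Λt p) ^ (-j) * X p q
              * exp (t • (Λ q) ^ l) * (Λ q) ^ j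
            + exp ((-t) • (Λt p) ^ l) * (Λt p) ^ (-j) * X p q
              * (exp (t • (Λ q) ^ l) * (Λ q) ^ l) * (Λ q) ^ j := by noncomm_ring
        _ = (Λt p) ^ l * exp ((-t) • (Λt p) ^ l) * (Λt p) ^ (-j)
              * (((Λt p) ^ (-l) * X p q * (Λ q) ^ l - X p q)
                * (exp (t • (Λ q) ^ l) * (Λ q) ^ j)) :=
            alg3 _ _ _ _ _ _ _ _ _ heu hfv mA mB
        _ = -(-((Λt p) ^ l * exp ((-t) • (Λt p) ^ l)) * ((Λt p) ^ (-j) * B p)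
              * (A q * exp (t • (Λ q) ^ l) * (Λ q) ^ j)) := by
            rw [hX p q]
            simp only [neg_mul, neg_neg, Matrix.mul_assoc]
    have hOmfun : (fun s => Om s j a b)
        = fun s => (∑ p : Fin N, ∑ q : Fin N,
            exp ((-s) • (Λt p) ^ l) * (Λt p) ^ (-j) * X p q
              * exp (s • (Λ q) ^ l) * (Λ q) ^ j) a b + om s a b := by
      funext s
      rw [hOm]
      simp [Matrix.add_apply]
    have hfinal := (entry_deriv hsum a b).add (homt t a b)
    rw [hOmfun]
    have hval : (-(ηt t j * θ t j) - γ₂ t) a b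
        = (∑ p : Fin N, ∑ q : Fin N,
            (-((Λt p) ^ l * exp ((-t) • (Λt p) ^ l)) * (Λt p) ^ (-j) * X p q
                * exp (t • (Λ q) ^ l)
              + exp ((-t) • (Λt p) ^ l) * (Λt p) ^ (-j) * X p q
                * (exp (t • (Λ q) ^ l) * (Λ q) ^ l)) * (Λ q) ^ j) a b + omt t a b := by
      rw [hγ₂, sub_neg_eq_add, ← hmat]
      simp [Matrix.add_apply]
    rw [hval]
    exact hfinal
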